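/- Let n = 8k with k ≥ 3, let H be the hypergraph of the basic construction, and fix j̃ ∈ {0,...,n/8−1} with associated group G_{j̃} = {e_j, e_{j+1}, e_{j+2}, e_{j+3}} (j = 4j̃+1). Then there is no hyperedge e_z of H satisfying both {8j̃+1, 8j̃+2} ∩ e_z ≠ ∅ and {8j̃+5, 8j̃+6} ∩ e_z ≠ ∅ (vertices mod n). -/
import Mathlib

/-- Edge set of the edge intersection hypergraph of a (set-of-hyperedges) hypergraph
on vertex set `ZMod n`. -/
def EIset {n : ℕ} (E : Set (Finset (ZMod n))) : Set (Finset (ZMod n)) :=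
  { s | ∃ e₁ ∈ E, ∃ e₂ ∈ E, e₁ ≠ e₂ ∧ s = e₁ ∩ e₂ ∧ 2 ≤ s.card }

/-- Edge set of the edge intersection hypergraph, for a finite family of hyperedges. -/
def EIsetF {n : ℕ} (E : Finset (Finset (ZMod n))) : Set (Finset (ZMod n)) :=
  { s | ∃ e₁ ∈ E, ∃ e₂ ∈ E, e₁ ≠ e₂ ∧ s = e₁ ∩ e₂ ∧ 2 ≤ s.card }

/-- The edge set of the cycle `Cₙ` on vertex set `ZMod n`. -/
def cycleEdges (n : ℕ) : Set (Finset (ZMod n)) :=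
  { s | ∃ i : ZMod n, s = {i, i + 1} }

/-- The number of edges of `Cₙ` contained in the hyperedge `e`. -/
noncomputable def kval {n : ℕ} (e : Finset (ZMod n)) : ℕ :=
  Set.ncard { s : Finset (ZMod n) | s ∈ cycleEdges n ∧ s ⊆ e }


/-- First hyperedge of the group indexed by \`t\` in the basic construction. -/
def eA (n t : ℕ) : Finset (ZMod n) :=
  let x : ZMod n := 8 * (t : ZMod n)
  {x + 1, x + 2, x + 3, x + 7, x + 8, x + 9}

def eB (n t : ℕ) : Finset (ZMod n) :=
  let x : ZMod n := 8 * (t : ZMod n)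
  {x + 2, x + 3, x + 4, x + 16, x + 17, x + 18}

def eC (n t : ℕ) : Finset (ZMod n) :=
  let x : ZMod n := 8 * (t : ZMod n)
  {x + 3, x + 4, x + 5, x + 13, x + 14, x + 15}

def eD (n t : ℕ) : Finset (ZMod n) :=
  let x : ZMod n := 8 * (t : ZMod n)
  {x + 4, x + 5, x + 6, x - 2, x - 1, x}

/-- The hyperedge set of the basic construction (case \`l = 0\`, \`n = 8k\`). -/
def basicE (n : ℕ) : Set (Finset (ZMod n)) :=
  { e | ∃ t : ℕ, t < n / 8 ∧ (e = eA n t ∨ e = eB n t ∨ e = eC n t ∨ e = eD n t) }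

theorem stmt17 (n k : ℕ) (hk : 3 ≤ k) (hn : n = 8 * k) (t : ℕ) (ht : t < n / 8) :
    ¬ ∃ e ∈ basicE n,
        (({8 * (t : ZMod n) + 1, 8 * (t : ZMod n) + 2} : Finset (ZMod n)) ∩ e).Nonempty ∧
        (({8 * (t : ZMod n) + 5, 8 * (t : ZMod n) + 6} : Finset (ZMod n)) ∩ e).Nonempty := by
  have h8 : (8 : ℕ) ∣ n := ⟨k, hn⟩
  set φ : ZMod n →+* ZMod 8 := ZMod.castHom h8 (ZMod 8) with hφdef
  have h8z : φ (8 : ZMod n) = 0 := by rw [map_ofNat]; decide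
  have hφ : ∀ (u : ℕ), φ (8 * (u : ZMod n)) = 0 := by
    intro u; rw [map_mul, h8z, zero_mul]
  rintro ⟨e, ⟨s, hs, hcase⟩, h1, h2⟩
  rcases hcase with h | h | h | h <;> subst h
  · obtain ⟨x, hx⟩ := h2
    simp only [eA, Finset.mem_inter, Finset.mem_insert, Finset.mem_singleton] at hx
    obtain ⟨hxa, hxc⟩ := hx
    rcases hxa with h | h <;> rcases hxc with h' | h' | h' | h' | h' | h' <;>
      · rw [h] at h'
        have := congrArg φ h'
        simp only [map_add, map_sub, hφ, map_ofNat, map_one, zero_add, zero_sub] at this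
        revert this; decide
  · obtain ⟨x, hx⟩ := h2
    simp only [eB, Finset.mem_inter, Finset.mem_insert, Finset.mem_singleton] at hx
    obtain ⟨hxa, hxc⟩ := hx
    rcases hxa with h | h <;> rcases hxc with h' | h' | h' | h' | h' | h' <;>
      · rw [h] at h'
        have := congrArg φ h'
        simp only [map_add, map_sub, hφ, map_ofNat, map_one, zero_add, zero_sub] at this
        revert this; decide
  · obtain ⟨x, hx⟩ := h1
    simp only [eC, Finset.mem_inter, Finset.mem_insert, Finset.mem_singleton] at hx
    obtain ⟨hxa, hxc⟩ := hx
    rcases hxa with h | h <;> rcases hxc with h' | h' | h' | h' | h' | h' <;>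
      · rw [h] at h'
        have := congrArg φ h'
        simp only [map_add, map_sub, hφ, map_ofNat, map_one, zero_add, zero_sub] at this
        revert this; decide
  · obtain ⟨x, hx⟩ := h1
    simp only [eD, Finset.mem_inter, Finset.mem_insert, Finset.mem_singleton] at hx
    obtain ⟨hxa, hxc⟩ := hx
    rcases hxa with h | h <;> rcases hxc with h' | h' | h' | h' | h' | h' <;>
      · rw [h] at h'
        have := congrArg φ h'
        simp only [map_add, map_sub, hφ, map_ofNat, map_one, zero_add, zero_sub] at this
        revert this; decide
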